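/- Assume k is even with k ≥ 2 and p_j > 0 for all j. If w ∈ ℝ^d satisfies B(w)^{k−1} w_j = A(w)^{k−1} w*_j for all j ∈ {1,…,d} (i.e., the population gradient of L vanishes at w), then w = 0 or w = w* or w = −w*. -/

import Mathlib

/-- The weighted alignment `A(w) = ∑_j p_j w_j w*_j`. -/
noncomputable def alignA (d : ℕ) (p wstar w : Fin d → ℝ) : ℝ :=
  ∑ j, p j * w j * wstar j

/-- The weighted norm `B(w) = ∑_j p_j w_j²`. -/
noncomputable def normB (d : ℕ) (p w : Fin d → ℝ) : ℝ :=
  ∑ j, p j * (w j) ^ 2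

/-- For the population loss of the k-multiplicative composition task with `k` even, `k ≥ 2`,
and `p_j > 0` for all `j`: the only stationary points (where
`B(w)^{k−1} w_j = A(w)^{k−1} w*_j` for all `j`) are `w = 0`, `w = w*` and `w = −w*`. -/
theorem stationary_points (d k : ℕ) (hd : 0 < d) (hk : 2 ≤ k) (hkeven : Even k)
    (p : Fin d → ℝ) (hp : ∀ j, 0 < p j) (hp1 : ∑ j, p j = 1)
    (wstar : Fin d → ℝ) (hws : ∀ j, wstar j = 1 ∨ wstar j = -1)
    (w : Fin d → ℝ)
    (hcrit : ∀ j, (normB d p w) ^ (k - 1) * w j = (alignA d p wstar w) ^ (k - 1) * wstar j) :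
    w = 0 ∨ w = wstar ∨ w = -wstar := by
  set B := normB d p w with hB
  set A := alignA d p wstar w with hA
  by_cases hB0 : B = 0
  · left
    funext j
    have hnn : ∀ i ∈ Finset.univ, (0:ℝ) ≤ p i * (w i) ^ 2 :=
      fun i _ => mul_nonneg (hp i).le (sq_nonneg _)
    have hz := (Finset.sum_eq_zero_iff_of_nonneg hnn).mp hB0 j (Finset.mem_univ j)
    have hpj := hp j
    have : (w j) ^ 2 = 0 := by
      by_contra h
      have : 0 < (w j) ^ 2 := lt_of_le_of_ne (sq_nonneg _) (Ne.symm h)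
      nlinarith
    simpa using pow_eq_zero_iff (n := 2) (by norm_num) |>.mp this
  · have hBk : B ^ (k - 1) ≠ 0 := pow_ne_zero _ hB0
    set c : ℝ := A ^ (k - 1) / B ^ (k - 1) with hc
    have hw : ∀ j, w j = c * wstar j := by
      intro j
      have := hcrit j
      field_simp [hc]
      rw [hc, div_mul_eq_mul_div, eq_div_iff hBk]
      linear_combination hcrit j
    have hws2 : ∀ j, (wstar j) ^ 2 = 1 := by
      intro j; rcases hws j with h | h <;> rw [h] <;> norm_num
    have hAc : A = c := by
      rw [hA, alignA]
      have : ∀ j ∈ Finset.univ, p j * w j * wstar j = c * p j := by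
        intro j _
        rw [hw j]
        linear_combination p j * c * hws2 j
      rw [Finset.sum_congr rfl this, ← Finset.mul_sum, hp1, mul_one]
    have hBc : B = c ^ 2 := by
      rw [hB, normB]
      have : ∀ j ∈ Finset.univ, p j * (w j) ^ 2 = c ^ 2 * p j := by
        intro j _
        rw [hw j]
        linear_combination p j * c ^ 2 * hws2 j
      rw [Finset.sum_congr rfl this, ← Finset.mul_sum, hp1, mul_one]
    have hc0 : c ≠ 0 := by
      intro h
      exact hB0 (by rw [hBc, h]; ring)
    -- use criticality at j₀
    have j0 : Fin d := ⟨0, hd⟩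
    have hws0 : wstar j0 ≠ 0 := by rcases hws j0 with h | h <;> rw [h] <;> norm_num
    have key : c ^ (2 * (k - 1) + 1) = c ^ (k - 1) := by
      have h := hcrit j0
      rw [hBc, hAc, hw j0] at h
      have h2 : (c ^ 2) ^ (k - 1) * c * wstar j0 = c ^ (k - 1) * wstar j0 := by
        linear_combination h
      have := mul_right_cancel₀ hws0 h2
      rw [← pow_mul] at this
      rw [pow_succ]
      linarith [this]
    have hkk : k - 1 + k = 2 * (k - 1) + 1 := by omega
    have hck : c ^ k = 1 := by
      have h1 : c ^ (k - 1) * c ^ k = c ^ (k - 1) * 1 := by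
        rw [mul_one, ← pow_add, hkk, key]
      exact mul_left_cancel₀ (pow_ne_zero _ hc0) h1
    rcases (pow_eq_one_iff_of_ne_zero (by omega)).mp hck with h1 | h1
    · right; left; funext j; rw [hw j, h1, one_mul]
    · right; right; funext j
      simp only [Pi.neg_apply]
      rw [hw j, h1.1]; ring
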